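/- For every integer n ≥ 1, the rational number Σ_{k=0}^{n} (-1)^k · binom(n, k) · binom(2n-k, n) / (2n - k) equals 0. -/

import Mathlib

open Polynomial Finset

lemma key_poly (n : ℕ) (hn : 1 ≤ n) :
    ∑ k ∈ Finset.range (n + 1), Polynomial.C ((-1 : ℚ) ^ k * (Nat.choose n k : ℚ)) *
      (Polynomial.X + 1) ^ (2 * n - 1 - k)
      = Polynomial.X ^ n * (Polynomial.X + 1) ^ (n - 1) := by
  have h1 : ((Polynomial.X : ℚ[X]) + 1 + (-1)) ^ n
      = ∑ k ∈ Finset.range (n + 1),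
        (Polynomial.X + 1) ^ k * (-1) ^ (n - k) * (Nat.choose n k : ℚ[X]) :=
    add_pow _ _ _
  calc ∑ k ∈ Finset.range (n + 1), Polynomial.C ((-1 : ℚ) ^ k * (Nat.choose n k : ℚ)) *
      (Polynomial.X + 1) ^ (2 * n - 1 - k)
      = (Polynomial.X + 1) ^ (n - 1) * ∑ k ∈ Finset.range (n + 1),
          (Polynomial.X + 1) ^ (n - k) * (-1) ^ k * (Nat.choose n k : ℚ[X]) := by
        rw [Finset.mul_sum]
        refine Finset.sum_congr rfl fun k hk => ?_
        have hk' : k ≤ n := Nat.lt_succ_iff.mp (Finset.mem_range.mp hk)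
        have hpow : 2 * n - 1 - k = (n - 1) + (n - k) := by omega
        rw [hpow, pow_add]
        simp only [map_mul, map_pow, map_neg, map_one, Polynomial.C_eq_natCast]
        ring
    _ = (Polynomial.X + 1) ^ (n - 1) * Polynomial.X ^ n := by
        congr 1
        have := h1
        rw [show ((Polynomial.X : ℚ[X]) + 1 + (-1)) = Polynomial.X by ring] at this
        rw [this]
        rw [← Finset.sum_range_reflect]
        refine Finset.sum_congr rfl fun k hk => ?_
        have hk' : k ≤ n := Nat.lt_succ_iff.mp (Finset.mem_range.mp hk)
        rw [show n + 1 - 1 - k = n - k by omega, show n - (n - k) = k by omega,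
          Nat.choose_symm hk']
    _ = Polynomial.X ^ n * (Polynomial.X + 1) ^ (n - 1) := by ring

lemma key_sum (n : ℕ) (hn : 1 ≤ n) :
    ∑ k ∈ Finset.range (n + 1), (-1 : ℚ) ^ k * (Nat.choose n k : ℚ) *
      (Nat.choose (2 * n - 1 - k) (n - 1) : ℚ) = 0 := by
  have h := congrArg (fun p : ℚ[X] => p.coeff (n - 1)) (key_poly n hn)
  simp only [Polynomial.finset_sum_coeff, Polynomial.coeff_C_mul,
    Polynomial.coeff_X_add_one_pow] at h
  rw [Polynomial.X_pow_mul, Polynomial.coeff_mul_X_pow'] at h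
  rw [if_neg (by omega)] at h
  rw [← h]

/-- Vanishing identity from the proof of Lemma 4.3:
`Σ_{k=0}^n (-1)^k C(n,k) C(2n-k,n) / (2n-k) = 0` in `ℚ`. -/
theorem alternating_binom_sum_eq_zero (n : ℕ) (hn : 1 ≤ n) :
    ∑ k ∈ Finset.range (n + 1), (-1 : ℚ) ^ k *
      (Nat.choose n k : ℚ) * (Nat.choose (2 * n - k) n : ℚ) / ((2 * n - k : ℕ) : ℚ) = 0 := by
  have key := key_sum n hn
  have hn0 : (n : ℚ) ≠ 0 := Nat.cast_ne_zero.mpr (by omega)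
  rw [show (0 : ℚ) = (∑ k ∈ Finset.range (n + 1), (-1 : ℚ) ^ k * (Nat.choose n k : ℚ) *
      (Nat.choose (2 * n - 1 - k) (n - 1) : ℚ)) / n by rw [key]; simp]
  rw [Finset.sum_div]
  refine Finset.sum_congr rfl fun k hk => ?_
  have hk' : k ≤ n := Nat.lt_succ_iff.mp (Finset.mem_range.mp hk)
  have hm : 2 * n - k ≠ 0 := by omega
  have hm0 : ((2 * n - k : ℕ) : ℚ) ≠ 0 := Nat.cast_ne_zero.mpr hm
  have hid : (2 * n - k) * Nat.choose (2 * n - 1 - k) (n - 1)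
      = Nat.choose (2 * n - k) n * n := by
    have h2 := Nat.add_one_mul_choose_eq (2 * n - k - 1) (n - 1)
    rw [show (2 * n - k - 1) + 1 = 2 * n - k by omega,
        show (n - 1) + 1 = n by omega] at h2
    rw [show 2 * n - 1 - k = 2 * n - k - 1 by omega]
    exact h2
  have hidQ : ((2 * n - k : ℕ) : ℚ) * (Nat.choose (2 * n - 1 - k) (n - 1) : ℚ)
      = (Nat.choose (2 * n - k) n : ℚ) * (n : ℚ) := by exact_mod_cast hid
  rw [div_eq_div_iff hm0 hn0]
  linear_combination (-((-1 : ℚ) ^ k * (Nat.choose n k : ℚ))) * hidQ
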